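/- For the graph G = H_{x,3} built from a double-Staller graph H with k even, \gamma_g(H|x) = \gamma_g(H) = k+1 and \gamma_g'(H|x) = \gamma_g'(H) = k, Dominator has a strategy in the Dominator-start game on G - e (where e = xy) guaranteeing the game ends in at most 2k + 1 moves; namely, start with y' and thereafter respond in the same component (H or H'|x') as Staller's previous move. -/

import Mathlib

open Finset
open scoped Classical

variable {V : Type*}

/-- The closed neighborhood `N[v]` of a vertex, as a finset. -/
noncomputable def closedNbhd [Fintype V] (G : SimpleGraph V) (v : V) : Finset V :=
  Finset.univ.filter (fun u => u = v ∨ G.Adj v u)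

/-- The legal moves in the domination game when `D` is the set of dominated vertices:
vertices whose closed neighborhood is not already dominated. -/
noncomputable def legalMoves [Fintype V] (G : SimpleGraph V) (D : Finset V) : Finset V :=
  Finset.univ.filter (fun v => ¬ closedNbhd G v ⊆ D)

lemma legalMoves_nonempty [Fintype V] (G : SimpleGraph V) {D : Finset V}
    (h : D ≠ Finset.univ) : (legalMoves G D).Nonempty := by
  obtain ⟨v, hv⟩ : ∃ v, v ∉ D := by
    by_contra hc
    push_neg at hc
    exact h (Finset.eq_univ_iff_forall.2 hc)
  refine ⟨v, ?_⟩
  simp only [legalMoves, Finset.mem_filter, Finset.mem_univ, true_and]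
  intro hsub
  exact hv (hsub (by simp [closedNbhd]))

lemma card_lt_of_legal [Fintype V] (G : SimpleGraph V) {D : Finset V} {v : V}
    (hv : v ∈ legalMoves G D) :
    (Finset.univ \ (D ∪ closedNbhd G v)).card < (Finset.univ \ D).card := by
  simp only [legalMoves, Finset.mem_filter, Finset.mem_univ, true_and] at hv
  obtain ⟨u, hu1, hu2⟩ := Finset.not_subset.1 hv
  apply Finset.card_lt_card
  constructor
  · exact Finset.sdiff_subset_sdiff (le_refl _) Finset.subset_union_left
  · intro hsub
    have := hsub (Finset.mem_sdiff.2 ⟨Finset.mem_univ u, hu2⟩)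
    simp only [Finset.mem_sdiff, Finset.mem_union] at this
    exact this.2 (Or.inr hu1)

/-- Optimal number of moves in the domination game on the partially dominated graph `G|D`;
`turn = true` means Dominator (the minimizer) moves next, `turn = false` means Staller
(the maximizer) moves next.  Every move must dominate a not-yet-dominated vertex and the
game ends when all vertices are dominated. -/
noncomputable def gameVal [Fintype V] (G : SimpleGraph V) : Bool → Finset V → ℕ
  | turn, D =>
    if h : D = Finset.univ then 0
    else
      have hne : (legalMoves G D).attach.Nonempty :=
        (Finset.attach_nonempty_iff).2 (legalMoves_nonempty G h)
      if turn then
        1 + (legalMoves G D).attach.inf' hne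
          (fun v => gameVal G false (D ∪ closedNbhd G v.1))
      else
        1 + (legalMoves G D).attach.sup' hne
          (fun v => gameVal G true (D ∪ closedNbhd G v.1))
  termination_by turn D => (Finset.univ \ D).card
  decreasing_by all_goals exact card_lt_of_legal G v.2

/-- The Dominator-start game domination number `γ_g(G|S)` of the partially dominated graph. -/
noncomputable def gammaG [Fintype V] (G : SimpleGraph V) (S : Finset V) : ℕ :=
  gameVal G true S

/-- The Staller-start game domination number `γ_g'(G|S)` of the partially dominated graph. -/
noncomputable def gammaG' [Fintype V] (G : SimpleGraph V) (S : Finset V) : ℕ :=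
  gameVal G false S

/-- Optimal number of (non-pass) moves in the Staller `p`-pass domination game on `G|D`:
the Dominator-start game in which Staller may additionally pass at most `p` times. -/
noncomputable def passVal [Fintype V] (G : SimpleGraph V) : Bool → ℕ → Finset V → ℕ
  | turn, p, D =>
    if h : D = Finset.univ then 0
    else
      have hne : (legalMoves G D).attach.Nonempty :=
        (Finset.attach_nonempty_iff).2 (legalMoves_nonempty G h)
      if turn then
        1 + (legalMoves G D).attach.inf' hne
          (fun v => passVal G false p (D ∪ closedNbhd G v.1))
      else
        match p with
        | 0 =>
          1 + (legalMoves G D).attach.sup' hne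
            (fun v => passVal G true 0 (D ∪ closedNbhd G v.1))
        | q + 1 =>
          max
            (1 + (legalMoves G D).attach.sup' hne
              (fun v => passVal G true (q + 1) (D ∪ closedNbhd G v.1)))
            (passVal G true q D)
  termination_by turn p D => ((Finset.univ \ D).card, p)
  decreasing_by
  · exact Prod.Lex.left _ _ (card_lt_of_legal G v.2)
  · exact Prod.Lex.left _ _ (card_lt_of_legal G v.2)
  · exact Prod.Lex.left _ _ (card_lt_of_legal G v.2)
  · exact Prod.Lex.right _ (Nat.lt_succ_self q)

/-- `γ_g^{St,p}(G)`: the Staller `p`-pass game domination number. -/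
noncomputable def gammaPass [Fintype V] (G : SimpleGraph V) (p : ℕ) : ℕ :=
  passVal G true p ∅

/-- Value (in `ℤ`) of the Dominator `1`-pass game on `G|D` in which the payoff is the
number of moves made minus the number of passes used by Dominator; Dominator minimizes,
Staller maximizes.  `turn = true` means it is Dominator's move, `pass = true` means the
pass is still available to Dominator. -/
noncomputable def domPassVal [Fintype V] (G : SimpleGraph V) : Bool → Bool → Finset V → ℤ
  | turn, pass, D =>
    if h : D = Finset.univ then 0
    else
      have hne : (legalMoves G D).attach.Nonempty :=
        (Finset.attach_nonempty_iff).2 (legalMoves_nonempty G h)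
      if turn then
        match pass with
        | false =>
          1 + (legalMoves G D).attach.inf' hne
            (fun v => domPassVal G false false (D ∪ closedNbhd G v.1))
        | true =>
          min
            (1 + (legalMoves G D).attach.inf' hne
              (fun v => domPassVal G false true (D ∪ closedNbhd G v.1)))
            (domPassVal G false false D - 1)
      else
        1 + (legalMoves G D).attach.sup' hne
          (fun v => domPassVal G true pass (D ∪ closedNbhd G v.1))
  termination_by turn pass D => ((Finset.univ \ D).card, pass.toNat)
  decreasing_by
  · exact Prod.Lex.left _ _ (card_lt_of_legal G v.2)
  · exact Prod.Lex.left _ _ (card_lt_of_legal G v.2)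
  · exact Prod.Lex.right _ (by norm_num)
  · exact Prod.Lex.left _ _ (card_lt_of_legal G v.2)

/-- A graph is a double-Staller graph if, in the Dominator `1`-pass game, Staller has a
strategy forcing at least `γ_g(G) + p` moves, where `p ∈ {0,1}` is the number of passes
used by Dominator.  Equivalently, the optimal value of "moves minus Dominator passes" in
that game is at least `γ_g(G)`. -/
def IsDoubleStaller [Fintype V] (G : SimpleGraph V) : Prop :=
  (gammaG G ∅ : ℤ) ≤ domPassVal G true true ∅

/-- An edge cut of `G`: a set of edges whose removal disconnects `G`. -/
def IsEdgeCut (G : SimpleGraph V) (C : Set (Sym2 V)) : Prop :=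
  C ⊆ G.edgeSet ∧ ¬ (G.deleteEdges C).Connected

/-- A minimal edge cut: no proper subset is an edge cut. -/
def IsMinimalEdgeCut (G : SimpleGraph V) (C : Set (Sym2 V)) : Prop :=
  IsEdgeCut G C ∧ ∀ C' ⊂ C, ¬ IsEdgeCut G C'

/-- A minimum edge cut: an edge cut of the smallest possible cardinality (this
cardinality is the edge-connectivity `κ'(G)`). -/
def IsMinimumEdgeCut (G : SimpleGraph V) (C : Set (Sym2 V)) : Prop :=
  IsEdgeCut G C ∧ ∀ C', IsEdgeCut G C' → C.ncard ≤ C'.ncard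

/-- A graph is traceable if it contains a Hamiltonian path. -/
def Traceable (G : SimpleGraph V) : Prop :=
  ∃ (a b : V) (p : G.Walk a b), p.IsHamiltonian
/-- The disjoint union of two graphs. -/
def sumGraph {V₁ V₂ : Type*} (G₁ : SimpleGraph V₁) (G₂ : SimpleGraph V₂) :
    SimpleGraph (V₁ ⊕ V₂) :=
  SimpleGraph.fromRel (fun a b =>
    match a, b with
    | Sum.inl u, Sum.inl w => G₁.Adj u w
    | Sum.inr u, Sum.inr w => G₂.Adj u w
    | _, _ => False)

/-- The graph `H_{x,3}`: two disjoint copies of `H` (the first copy on `Sum.inl ∘ Sum.inl`,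
the second on `Sum.inl ∘ Sum.inr`) joined by a path of length 3 from `x` to its copy `x'`
through the two internal vertices `y = Sum.inr 0` (adjacent to `x`) and
`y' = Sum.inr 1` (adjacent to `x'`). -/
def Hx3 (H : SimpleGraph V) (x : V) : SimpleGraph ((V ⊕ V) ⊕ Fin 2) :=
  SimpleGraph.fromRel (fun a b =>
    match a, b with
    | Sum.inl (Sum.inl u), Sum.inl (Sum.inl w) => H.Adj u w
    | Sum.inl (Sum.inr u), Sum.inl (Sum.inr w) => H.Adj u w
    | Sum.inl (Sum.inl u), Sum.inr i => u = x ∧ i = 0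
    | Sum.inl (Sum.inr u), Sum.inr i => u = x ∧ i = 1
    | Sum.inr i, Sum.inr j => i ≠ j
    | _, _ => False)

/-- The tree `T_n`: a star `K_{1,n}` with center `Sum.inl ()`, support vertices
`Sum.inr (Sum.inl i)`, and four leaves `Sum.inr (Sum.inr (i, l))` attached to each
support vertex. -/
def Tn (n : ℕ) : SimpleGraph (Unit ⊕ (Fin n ⊕ Fin n × Fin 4)) :=
  SimpleGraph.fromRel (fun a b =>
    match a, b with
    | Sum.inl _, Sum.inr (Sum.inl _) => True
    | Sum.inr (Sum.inl i), Sum.inr (Sum.inr jl) => i = jl.1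
    | _, _ => False)

/-- The graph `K_k(H)`: the disjoint union of the complete graph `K_k` (on `Fin k`,
embedded via `Sum.inl`) and the graph `H` (embedded via `Sum.inr`), together with the
two extra edges `au` and `bv`. -/
def KkH {W : Type*} (k : ℕ) (H : SimpleGraph W) (u v : Fin k) (a b : W) :
    SimpleGraph (Fin k ⊕ W) :=
  SimpleGraph.fromRel (fun s t =>
    match s, t with
    | Sum.inl i, Sum.inl j => i ≠ j
    | Sum.inr w₁, Sum.inr w₂ => H.Adj w₁ w₂
    | Sum.inl i, Sum.inr w => (i = u ∧ w = a) ∨ (i = v ∧ w = b)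
    | _, _ => False)
section Helpers
variable {V : Type*} [Fintype V] (G : SimpleGraph V)

lemma inf'_attach_eq {α : Type*} (s : Finset α) (h : s.attach.Nonempty) (f : α → ℕ) :
    s.attach.inf' h (fun v => f v.1) = s.inf' (Finset.attach_nonempty_iff.1 h) f := by
  apply le_antisymm
  · apply Finset.le_inf'
    intro b hb
    exact Finset.inf'_le (fun v => f v.1) (Finset.mem_attach _ ⟨b, hb⟩)
  · apply Finset.le_inf'
    intro b _
    exact Finset.inf'_le _ b.2

lemma sup'_attach_eq {α : Type*} (s : Finset α) (h : s.attach.Nonempty) (f : α → ℕ) :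
    s.attach.sup' h (fun v => f v.1) = s.sup' (Finset.attach_nonempty_iff.1 h) f := by
  apply le_antisymm
  · apply Finset.sup'_le
    intro b _
    exact Finset.le_sup' _ b.2
  · apply Finset.sup'_le
    intro b hb
    exact Finset.le_sup' (fun v => f v.1) (Finset.mem_attach _ ⟨b, hb⟩)

lemma gameVal_univ (t : Bool) : gameVal G t Finset.univ = 0 := by
  rw [gameVal, dif_pos rfl]

lemma gameVal_true_eq {D : Finset V} (h : D ≠ Finset.univ) :
    gameVal G true D = 1 + (legalMoves G D).inf' (legalMoves_nonempty G h)
      (fun v => gameVal G false (D ∪ closedNbhd G v)) := by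
  rw [gameVal]
  rw [dif_neg h]
  dsimp only
  rw [if_pos rfl,
    inf'_attach_eq (legalMoves G D) ((Finset.attach_nonempty_iff).2 (legalMoves_nonempty G h))
      (fun v => gameVal G false (D ∪ closedNbhd G v))]

lemma gameVal_false_eq {D : Finset V} (h : D ≠ Finset.univ) :
    gameVal G false D = 1 + (legalMoves G D).sup' (legalMoves_nonempty G h)
      (fun v => gameVal G true (D ∪ closedNbhd G v)) := by
  rw [gameVal]
  rw [dif_neg h]
  dsimp only
  rw [if_neg (by simp : ¬ (false = true)),
    sup'_attach_eq (legalMoves G D) ((Finset.attach_nonempty_iff).2 (legalMoves_nonempty G h))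
      (fun v => gameVal G true (D ∪ closedNbhd G v))]

lemma gameVal_true_le {D : Finset V} (h : D ≠ Finset.univ) {v : V}
    (hv : v ∈ legalMoves G D) :
    gameVal G true D ≤ 1 + gameVal G false (D ∪ closedNbhd G v) := by
  rw [gameVal_true_eq G h]
  exact Nat.add_le_add_left
    (Finset.inf'_le (fun v => gameVal G false (D ∪ closedNbhd G v)) hv) 1

lemma exists_gameVal_true_move {D : Finset V} (h : D ≠ Finset.univ) :
    ∃ v ∈ legalMoves G D,
      gameVal G true D = 1 + gameVal G false (D ∪ closedNbhd G v) := by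
  obtain ⟨v, hv, hv2⟩ := Finset.exists_mem_eq_inf' (legalMoves_nonempty G h)
    (fun v => gameVal G false (D ∪ closedNbhd G v))
  exact ⟨v, hv, by rw [gameVal_true_eq G h, hv2]⟩

lemma gameVal_false_le {D : Finset V} (h : D ≠ Finset.univ) {c : ℕ}
    (hc : ∀ v ∈ legalMoves G D, 1 + gameVal G true (D ∪ closedNbhd G v) ≤ c) :
    gameVal G false D ≤ c := by
  rw [gameVal_false_eq G h]
  obtain ⟨v, hv, hv2⟩ := Finset.exists_mem_eq_sup' (legalMoves_nonempty G h)
    (fun v => gameVal G true (D ∪ closedNbhd G v))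
  rw [hv2]
  exact hc v hv

lemma gameVal_false_ge {D : Finset V} (h : D ≠ Finset.univ) {v : V}
    (hv : v ∈ legalMoves G D) :
    1 + gameVal G true (D ∪ closedNbhd G v) ≤ gameVal G false D := by
  rw [gameVal_false_eq G h]
  exact Nat.add_le_add_left
    (Finset.le_sup' (fun v => gameVal G true (D ∪ closedNbhd G v)) hv) 1

lemma mem_closedNbhd_self (v : V) : v ∈ closedNbhd G v := by
  simp [closedNbhd]

end Helpers
section Cont
variable {V : Type*} [Fintype V] (G : SimpleGraph V)

lemma legalMoves_anti {D D' : Finset V} (hsub : D ⊆ D') {w : V}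
    (hw : w ∈ legalMoves G D') : w ∈ legalMoves G D := by
  simp only [legalMoves, Finset.mem_filter, Finset.mem_univ, true_and] at hw ⊢
  exact fun hc => hw (hc.trans hsub)

lemma gameVal_mono_aux : ∀ n : ℕ, ∀ (t : Bool) (D D' : Finset V),
    (Finset.univ \ D).card ≤ n → D ⊆ D' → gameVal G t D' ≤ gameVal G t D := by
  intro n
  induction n with
  | zero =>
    intro t D D' hcard hsub
    have hD : D = Finset.univ := by
      have h0 : Finset.univ \ D = ∅ := Finset.card_eq_zero.1 (Nat.le_zero.1 hcard)
      exact Finset.eq_univ_of_forall fun v => by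
        by_contra hv
        exact (Finset.notMem_empty v) (h0 ▸ Finset.mem_sdiff.2 ⟨Finset.mem_univ v, hv⟩)
    have hD' : D' = Finset.univ := Finset.univ_subset_iff.1 (hD ▸ hsub)
    rw [hD, hD', gameVal_univ]
  | succ n IH =>
    intro t D D' hcard hsub
    by_cases hD' : D' = Finset.univ
    · rw [hD', gameVal_univ]; exact Nat.zero_le _
    have hD : D ≠ Finset.univ := fun h => hD' (Finset.univ_subset_iff.1 (h ▸ hsub))
    cases t
    · -- Staller to move
      apply gameVal_false_le G hD'
      intro w hw
      have hwD : w ∈ legalMoves G D := legalMoves_anti G hsub hw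
      have hcard2 : (Finset.univ \ (D ∪ closedNbhd G w)).card ≤ n :=
        Nat.lt_succ_iff.1 (lt_of_lt_of_le (card_lt_of_legal G hwD) hcard)
      calc 1 + gameVal G true (D' ∪ closedNbhd G w)
          ≤ 1 + gameVal G true (D ∪ closedNbhd G w) :=
            Nat.add_le_add_left (IH true _ _ hcard2
              (Finset.union_subset_union hsub (le_refl _))) 1
        _ ≤ gameVal G false D := gameVal_false_ge G hD hwD
    · -- Dominator to move
      obtain ⟨v, hv, hveq⟩ := exists_gameVal_true_move G hD
      rw [hveq]
      have hcard2 : (Finset.univ \ (D ∪ closedNbhd G v)).card ≤ n :=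
        Nat.lt_succ_iff.1 (lt_of_lt_of_le (card_lt_of_legal G hv) hcard)
      by_cases hv' : v ∈ legalMoves G D'
      · calc gameVal G true D' ≤ 1 + gameVal G false (D' ∪ closedNbhd G v) :=
              gameVal_true_le G hD' hv'
          _ ≤ 1 + gameVal G false (D ∪ closedNbhd G v) :=
              Nat.add_le_add_left (IH false _ _ hcard2
                (Finset.union_subset_union hsub (le_refl _))) 1
      · have hNv : closedNbhd G v ⊆ D' := by
          simpa [legalMoves] using hv'
        have h1 : gameVal G true D' ≤ gameVal G true (D ∪ closedNbhd G v) :=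
          IH true _ _ hcard2 (Finset.union_subset hsub hNv)
        have h2 : gameVal G true (D ∪ closedNbhd G v) ≤
            1 + gameVal G false (D ∪ closedNbhd G v) := by
          by_cases hE : D ∪ closedNbhd G v = Finset.univ
          · rw [hE, gameVal_univ]; exact Nat.zero_le _
          · obtain ⟨w, hw⟩ := legalMoves_nonempty G hE
            calc gameVal G true (D ∪ closedNbhd G v)
                ≤ 1 + gameVal G false (D ∪ closedNbhd G v ∪ closedNbhd G w) :=
                  gameVal_true_le G hE hw
              _ ≤ 1 + gameVal G false (D ∪ closedNbhd G v) :=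
                  Nat.add_le_add_left (IH false _ _ hcard2 Finset.subset_union_left) 1
        exact le_trans h1 h2

lemma gameVal_mono {t : Bool} {D D' : Finset V} (hsub : D ⊆ D') :
    gameVal G t D' ≤ gameVal G t D :=
  gameVal_mono_aux G (Finset.univ \ D).card t D D' le_rfl hsub

lemma gameVal_true_le_one_add_false (D : Finset V) :
    gameVal G true D ≤ 1 + gameVal G false D := by
  by_cases hD : D = Finset.univ
  · rw [hD, gameVal_univ]; exact Nat.zero_le _
  · obtain ⟨w, hw⟩ := legalMoves_nonempty G hD
    calc gameVal G true D ≤ 1 + gameVal G false (D ∪ closedNbhd G w) :=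
          gameVal_true_le G hD hw
      _ ≤ 1 + gameVal G false D :=
          Nat.add_le_add_left (gameVal_mono G Finset.subset_union_left) 1

end Cont
section SumGame
variable {V : Type*} [Fintype V]

lemma sum_key (G : SimpleGraph V) (VA : Finset V)
    (hA : ∀ v ∈ VA, closedNbhd G v ⊆ VA)
    (hB : ∀ v ∈ VAᶜ, closedNbhd G v ⊆ VAᶜ) (D : Finset V)
    (IH : ∀ D' : Finset V, (Finset.univ \ D').card < (Finset.univ \ D).card →
      gameVal G false D' ≤
        (gameVal G false (D' ∪ VAᶜ) + gameVal G false (D' ∪ VAᶜ) % 2) +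
        (gameVal G false (D' ∪ VA) + gameVal G false (D' ∪ VA) % 2))
    {v : V} (hv : v ∈ legalMoves G D) (hvA : closedNbhd G v ⊆ VA) :
    1 + gameVal G true (D ∪ closedNbhd G v) ≤
      (gameVal G false (D ∪ VAᶜ) + gameVal G false (D ∪ VAᶜ) % 2) +
      (gameVal G false (D ∪ VA) + gameVal G false (D ∪ VA) % 2) := by
  set Nv := closedNbhd G v with hNv
  set E := D ∪ Nv with hE
  set α := gameVal G false (D ∪ VAᶜ) with hα
  set β := gameVal G false (D ∪ VA) with hβ
  have hNvD : ¬ Nv ⊆ D := by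
    simpa [legalMoves, hNv] using hv
  obtain ⟨u, hu1, hu2⟩ := Finset.not_subset.1 hNvD
  have huA : u ∈ VA := hvA hu1
  have hαne : D ∪ VAᶜ ≠ Finset.univ := by
    intro h
    have : u ∈ D ∪ VAᶜ := h ▸ Finset.mem_univ u
    rcases Finset.mem_union.1 this with h1 | h1
    · exact hu2 h1
    · exact (Finset.mem_compl.1 h1) huA
  have hvα : v ∈ legalMoves G (D ∪ VAᶜ) := by
    simp only [legalMoves, Finset.mem_filter, Finset.mem_univ, true_and]
    intro hc
    rcases Finset.mem_union.1 (hc hu1) with h1 | h1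
    · exact hu2 h1
    · exact (Finset.mem_compl.1 h1) huA
  have hα1 : 1 + gameVal G true (D ∪ VAᶜ ∪ Nv) ≤ α := gameVal_false_ge G hαne hvα
  have hEα : E ∪ VAᶜ = D ∪ VAᶜ ∪ Nv := Finset.union_right_comm D Nv VAᶜ
  have hEβ : E ∪ VA = D ∪ VA := by
    rw [hE, Finset.union_assoc, Finset.union_eq_right.2 hvA]
  rw [← hEα] at hα1
  by_cases hfin : E ∪ VAᶜ = Finset.univ
  · -- the VA-component is finished after Staller's move
    have hVAE : VA ⊆ E := by
      intro w hw
      rcases Finset.mem_union.1 (hfin ▸ Finset.mem_univ w) with h1 | h1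
      · exact h1
      · exact absurd hw (Finset.mem_compl.1 h1)
    have hE_eq : E = D ∪ VA := by
      rw [← hEβ, Finset.union_eq_left.2 hVAE]
    have h2 : gameVal G true E ≤ 1 + β := by
      rw [hE_eq]
      exact gameVal_true_le_one_add_false G (D ∪ VA)
    have hαpos : 1 ≤ α := le_trans (Nat.le_add_right 1 _) hα1
    omega
  · -- the VA-component continues: Dominator answers there
    obtain ⟨w, hwlegal, hweq⟩ := exists_gameVal_true_move G hfin
    set Nw := closedNbhd G w with hNwdef
    have hwn : ¬ Nw ⊆ E ∪ VAᶜ := by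
      simpa [legalMoves, hNwdef] using hwlegal
    have hwA : Nw ⊆ VA := by
      by_cases hcase : w ∈ VAᶜ
      · exact absurd ((hB w hcase).trans Finset.subset_union_right) hwn
      · exact hA w (by simpa using hcase)
    have hwE : w ∈ legalMoves G E := legalMoves_anti G Finset.subset_union_left hwlegal
    have hEne : E ≠ Finset.univ := fun h => hfin (by rw [h]; simp)
    have step1 : gameVal G true E ≤ 1 + gameVal G false (E ∪ Nw) :=
      gameVal_true_le G hEne hwE
    have hcard : (Finset.univ \ (E ∪ Nw)).card < (Finset.univ \ D).card :=
      lt_of_le_of_lt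
        (Finset.card_le_card
          (Finset.sdiff_subset_sdiff (le_refl _) Finset.subset_union_left))
        (card_lt_of_legal G hv)
    have hIH := IH (E ∪ Nw) hcard
    have e1 : E ∪ Nw ∪ VA = D ∪ VA := by
      rw [Finset.union_assoc, Finset.union_eq_right.2 hwA, hEβ]
    have e2 : E ∪ Nw ∪ VAᶜ = E ∪ VAᶜ ∪ Nw := Finset.union_right_comm _ _ _
    rw [e1, e2] at hIH
    rw [← hβ] at hIH
    omega

lemma sum_lemma (G : SimpleGraph V) (VA : Finset V)
    (hA : ∀ v ∈ VA, closedNbhd G v ⊆ VA)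
    (hB : ∀ v ∈ VAᶜ, closedNbhd G v ⊆ VAᶜ) :
    ∀ D : Finset V, gameVal G false D ≤
      (gameVal G false (D ∪ VAᶜ) + gameVal G false (D ∪ VAᶜ) % 2) +
      (gameVal G false (D ∪ VA) + gameVal G false (D ∪ VA) % 2) := by
  suffices H : ∀ n (D : Finset V), (Finset.univ \ D).card ≤ n →
      gameVal G false D ≤
        (gameVal G false (D ∪ VAᶜ) + gameVal G false (D ∪ VAᶜ) % 2) +
        (gameVal G false (D ∪ VA) + gameVal G false (D ∪ VA) % 2) by
    exact fun D => H _ D le_rfl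
  intro n
  induction n with
  | zero =>
    intro D hcard
    have hD : D = Finset.univ := by
      have h0 : Finset.univ \ D = ∅ := Finset.card_eq_zero.1 (Nat.le_zero.1 hcard)
      exact Finset.eq_univ_of_forall fun v => by
        by_contra hv
        exact (Finset.notMem_empty v) (h0 ▸ Finset.mem_sdiff.2 ⟨Finset.mem_univ v, hv⟩)
    rw [hD, gameVal_univ]
    exact Nat.zero_le _
  | succ n IHn =>
    intro D hcard
    by_cases hD : D = Finset.univ
    · rw [hD, gameVal_univ]; exact Nat.zero_le _
    have IH : ∀ D' : Finset V, (Finset.univ \ D').card < (Finset.univ \ D).card →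
        gameVal G false D' ≤
          (gameVal G false (D' ∪ VAᶜ) + gameVal G false (D' ∪ VAᶜ) % 2) +
          (gameVal G false (D' ∪ VA) + gameVal G false (D' ∪ VA) % 2) := by
      intro D' hlt
      exact IHn D' (Nat.lt_succ_iff.1 (lt_of_lt_of_le hlt hcard))
    apply gameVal_false_le G hD
    intro v hv
    by_cases hvA : v ∈ VA
    · exact sum_key G VA hA hB D IH hv (hA v hvA)
    · have hvB : v ∈ VAᶜ := Finset.mem_compl.2 hvA
      have IH' : ∀ D' : Finset V, (Finset.univ \ D').card < (Finset.univ \ D).card →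
          gameVal G false D' ≤
            (gameVal G false (D' ∪ VAᶜᶜ) + gameVal G false (D' ∪ VAᶜᶜ) % 2) +
            (gameVal G false (D' ∪ VAᶜ) + gameVal G false (D' ∪ VAᶜ) % 2) := by
        intro D' hlt
        rw [compl_compl]
        have := IH D' hlt
        omega
      have key := sum_key G VAᶜ hB (by rw [compl_compl]; exact hA) D IH' hv (hB v hvB)
      rw [compl_compl] at key
      omega

end SumGame
section Transfer

lemma inf'_image_nat {α β : Type*} [DecidableEq β] (s : Finset α) (f : α → β) (g : β → ℕ)
    (h2 : s.Nonempty) (h : (s.image f).Nonempty) :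
    (s.image f).inf' h g = s.inf' h2 (fun a => g (f a)) := by
  apply le_antisymm
  · exact Finset.le_inf' _ _ fun a ha => Finset.inf'_le g (Finset.mem_image_of_mem f ha)
  · apply Finset.le_inf'
    intro b hb
    obtain ⟨a, ha, rfl⟩ := Finset.mem_image.1 hb
    exact Finset.inf'_le (fun a => g (f a)) ha

lemma sup'_image_nat {α β : Type*} [DecidableEq β] (s : Finset α) (f : α → β) (g : β → ℕ)
    (h2 : s.Nonempty) (h : (s.image f).Nonempty) :
    (s.image f).sup' h g = s.sup' h2 (fun a => g (f a)) := by
  apply le_antisymm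
  · apply Finset.sup'_le
    intro b hb
    obtain ⟨a, ha, rfl⟩ := Finset.mem_image.1 hb
    exact Finset.le_sup' (fun a => g (f a)) ha
  · exact Finset.sup'_le _ _ fun a ha => Finset.le_sup' g (Finset.mem_image_of_mem f ha)

variable {V W : Type*} [Fintype V] [Fintype W]

lemma transfer (H : SimpleGraph V) (G : SimpleGraph W)
    (φ : V → W) (hφ : Function.Injective φ) (T : Finset W) (B : Finset V)
    (hdisj : ∀ u : V, φ u ∉ T)
    (hcover : ∀ w : W, w ∉ T → ∃ u, w = φ u)
    (hnb : ∀ u : V, closedNbhd G (φ u) ∪ T = (closedNbhd H u).image φ ∪ T)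
    (hrest : ∀ w : W, (∀ u, w ≠ φ u) → closedNbhd G w ⊆ B.image φ ∪ T) :
    ∀ (t : Bool) (S : Finset V), B ⊆ S →
      gameVal G t (S.image φ ∪ T) = gameVal H t S := by
  suffices Hn : ∀ (n : ℕ) (t : Bool) (S : Finset V), B ⊆ S →
      (Finset.univ \ S).card ≤ n → gameVal G t (S.image φ ∪ T) = gameVal H t S by
    exact fun t S hBS => Hn _ t S hBS le_rfl
  have huniv : ∀ S : Finset V, (S.image φ ∪ T = Finset.univ ↔ S = Finset.univ) := by
    intro S
    constructor
    · intro h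
      apply Finset.eq_univ_of_forall
      intro u
      have : φ u ∈ S.image φ ∪ T := h ▸ Finset.mem_univ _
      rcases Finset.mem_union.1 this with h1 | h1
      · obtain ⟨u', hu', he⟩ := Finset.mem_image.1 h1
        exact hφ he ▸ hu'
      · exact absurd h1 (hdisj u)
    · intro h
      apply Finset.eq_univ_of_forall
      intro w
      by_cases hw : w ∈ T
      · exact Finset.mem_union_right _ hw
      · obtain ⟨u, rfl⟩ := hcover w hw
        exact Finset.mem_union_left _ (Finset.mem_image_of_mem φ (h ▸ Finset.mem_univ u))
  have hlegal : ∀ S : Finset V, B ⊆ S →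
      legalMoves G (S.image φ ∪ T) = (legalMoves H S).image φ := by
    intro S hBS
    ext w
    simp only [legalMoves, Finset.mem_filter, Finset.mem_univ, true_and, Finset.mem_image]
    constructor
    · intro hw
      by_cases hform : ∀ u, w ≠ φ u
      · exact absurd ((hrest w hform).trans
          (Finset.union_subset_union (Finset.image_subset_image hBS) (le_refl _))) hw
      · push_neg at hform
        obtain ⟨u, rfl⟩ := hform
        refine ⟨u, ?_, rfl⟩
        intro hc
        apply hw
        calc closedNbhd G (φ u) ⊆ closedNbhd G (φ u) ∪ T := Finset.subset_union_left
          _ = (closedNbhd H u).image φ ∪ T := hnb u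
          _ ⊆ S.image φ ∪ T :=
            Finset.union_subset_union (Finset.image_subset_image hc) (le_refl _)
    · rintro ⟨u, hu, rfl⟩
      obtain ⟨z, hz1, hz2⟩ := Finset.not_subset.1 hu
      intro hc
      have hzT : φ z ∉ T := hdisj z
      have hzN : φ z ∈ closedNbhd G (φ u) := by
        have : φ z ∈ (closedNbhd H u).image φ ∪ T :=
          Finset.mem_union_left _ (Finset.mem_image_of_mem φ hz1)
        rw [← hnb u] at this
        rcases Finset.mem_union.1 this with h1 | h1
        · exact h1
        · exact absurd h1 hzT
      rcases Finset.mem_union.1 (hc hzN) with h1 | h1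
      · obtain ⟨z', hz', he⟩ := Finset.mem_image.1 h1
        exact hz2 (hφ he ▸ hz')
      · exact hzT h1
  have hnewpos : ∀ (S : Finset V) (u : V),
      (S.image φ ∪ T) ∪ closedNbhd G (φ u) = (S ∪ closedNbhd H u).image φ ∪ T := by
    intro S u
    rw [Finset.image_union, Finset.union_right_comm, Finset.union_assoc,
      hnb u, ← Finset.union_assoc, Finset.union_right_comm]
  intro n
  induction n with
  | zero =>
    intro t S hBS hcard
    have hS : S = Finset.univ := by
      have h0 : Finset.univ \ S = ∅ := Finset.card_eq_zero.1 (Nat.le_zero.1 hcard)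
      exact Finset.eq_univ_of_forall fun v => by
        by_contra hv
        exact (Finset.notMem_empty v) (h0 ▸ Finset.mem_sdiff.2 ⟨Finset.mem_univ v, hv⟩)
    rw [(huniv S).2 hS, hS, gameVal_univ, gameVal_univ]
  | succ n IHn =>
    intro t S hBS hcard
    by_cases hS : S = Finset.univ
    · rw [(huniv S).2 hS, hS, gameVal_univ, gameVal_univ]
    have hGne : S.image φ ∪ T ≠ Finset.univ := fun h => hS ((huniv _).1 h)
    have hne : (legalMoves H S).Nonempty := legalMoves_nonempty H hS
    have hne' : ((legalMoves H S).image φ).Nonempty := hne.image φ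
    have key : ∀ u ∈ legalMoves H S, ∀ t' : Bool,
        gameVal G t' ((S.image φ ∪ T) ∪ closedNbhd G (φ u)) =
          gameVal H t' (S ∪ closedNbhd H u) := by
      intro u hu t'
      rw [hnewpos S u]
      apply IHn t' _ (hBS.trans Finset.subset_union_left)
      exact Nat.lt_succ_iff.1 (lt_of_lt_of_le (card_lt_of_legal H hu) hcard)
    cases t
    · rw [gameVal_false_eq G hGne, gameVal_false_eq H hS]
      congr 1
      rw [Finset.sup'_congr (legalMoves_nonempty G hGne) (hlegal S hBS)
        (fun w _ => rfl),
        sup'_image_nat _ _ _ hne]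
      exact Finset.sup'_congr hne rfl (fun u hu => key u hu true)
    · rw [gameVal_true_eq G hGne, gameVal_true_eq H hS]
      congr 1
      rw [Finset.inf'_congr (legalMoves_nonempty G hGne) (hlegal S hBS)
        (fun w _ => rfl),
        inf'_image_nat _ _ _ hne]
      exact Finset.inf'_congr hne rfl (fun u hu => key u hu false)

end Transfer
section Specific
variable {V : Type*} [Fintype V] (H : SimpleGraph V) (x : V)

/-- The graph `G - e`. -/
noncomputable def Gx : SimpleGraph ((V ⊕ V) ⊕ Fin 2) :=
  (Hx3 H x).deleteEdges {s(Sum.inl (Sum.inl x), Sum.inr (0 : Fin 2))}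

def eA : V → (V ⊕ V) ⊕ Fin 2 := fun u => Sum.inl (Sum.inl u)
def eB : V → (V ⊕ V) ⊕ Fin 2 := fun u => Sum.inl (Sum.inr u)

lemma cnA (u : V) : closedNbhd (Gx H x) (eA u) = (closedNbhd H u).image (eA (V := V)) := by
  ext w
  simp only [closedNbhd, Gx, eA, Finset.mem_image, Finset.mem_filter, Finset.mem_univ,
    true_and]
  rcases w with (w | w) | i
  · simp [Hx3, SimpleGraph.deleteEdges_adj, SimpleGraph.fromRel_adj, Sym2.eq_iff]
    constructor
    · intro h; tauto
    · rintro (rfl | h)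
      · exact Or.inl rfl
      · exact Or.inr ⟨H.ne_of_adj h, Or.inl h⟩
  · simp [Hx3, SimpleGraph.deleteEdges_adj, SimpleGraph.fromRel_adj, Sym2.eq_iff]
  · simp [Hx3, SimpleGraph.deleteEdges_adj, SimpleGraph.fromRel_adj, Sym2.eq_iff]

lemma cnB (u : V) : closedNbhd (Gx H x) (eB u) =
    (closedNbhd H u).image (eB (V := V)) ∪ (if u = x then {Sum.inr 1} else ∅) := by
  ext w
  simp only [closedNbhd, Gx, eB, Finset.mem_union, Finset.mem_image, Finset.mem_filter,
    Finset.mem_univ, true_and]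
  rcases w with (w | w) | i
  · simp [Hx3, SimpleGraph.deleteEdges_adj, SimpleGraph.fromRel_adj, Sym2.eq_iff]
    split <;> simp
  · simp [Hx3, SimpleGraph.deleteEdges_adj, SimpleGraph.fromRel_adj, Sym2.eq_iff]
    constructor
    · intro h
      split <;> simp <;> tauto
    · intro h
      rcases h with h | h
      · rcases h with rfl | h
        · exact Or.inl rfl
        · exact Or.inr ⟨H.ne_of_adj h, Or.inl h⟩
      · split at h <;> simp_all
  · simp [Hx3, SimpleGraph.deleteEdges_adj, SimpleGraph.fromRel_adj, Sym2.eq_iff]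
    by_cases hux : u = x <;> simp [hux]

lemma cnY : closedNbhd (Gx H x) (Sum.inr 0) = {Sum.inr 0, Sum.inr 1} := by
  ext w
  simp only [closedNbhd, Gx, Finset.mem_filter, Finset.mem_univ, true_and,
    Finset.mem_insert, Finset.mem_singleton]
  rcases w with (w | w) | i
  · simp [Hx3, SimpleGraph.deleteEdges_adj, SimpleGraph.fromRel_adj, Sym2.eq_iff]
  · simp [Hx3, SimpleGraph.deleteEdges_adj, SimpleGraph.fromRel_adj, Sym2.eq_iff]
  · simp [Hx3, SimpleGraph.deleteEdges_adj, SimpleGraph.fromRel_adj, Sym2.eq_iff]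
    omega

lemma cnY' : closedNbhd (Gx H x) (Sum.inr 1) =
    {Sum.inr 0, Sum.inr 1, eB x} := by
  ext w
  simp only [closedNbhd, Gx, eB, Finset.mem_filter, Finset.mem_univ, true_and,
    Finset.mem_insert, Finset.mem_singleton]
  rcases w with (w | w) | i
  · simp [Hx3, SimpleGraph.deleteEdges_adj, SimpleGraph.fromRel_adj, Sym2.eq_iff]
  · simp [Hx3, SimpleGraph.deleteEdges_adj, SimpleGraph.fromRel_adj, Sym2.eq_iff]
  · simp [Hx3, SimpleGraph.deleteEdges_adj, SimpleGraph.fromRel_adj, Sym2.eq_iff]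
    omega

end Specific

section MemLemmas
variable {V : Type*} [Fintype V] (H : SimpleGraph V) (x : V)

/-- The first copy of `H` inside `H_{x,3}`, as a vertex subset. -/
noncomputable def VAset : Finset ((V ⊕ V) ⊕ Fin 2) := Finset.univ.image (eA (V := V))

/-- The dominated "rest" used for the second copy. -/
noncomputable def Tset : Finset ((V ⊕ V) ⊕ Fin 2) :=
  VAset (V := V) ∪ {Sum.inr 0, Sum.inr 1}

lemma mem_cnA {u : V} {w : (V ⊕ V) ⊕ Fin 2} :
    w ∈ closedNbhd (Gx H x) (eA u) ↔ ∃ z ∈ closedNbhd H u, eA z = w := by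
  rw [cnA]; simp

lemma mem_cnB {u : V} {w : (V ⊕ V) ⊕ Fin 2} :
    w ∈ closedNbhd (Gx H x) (eB u) ↔
      ((∃ z ∈ closedNbhd H u, eB z = w) ∨ (u = x ∧ w = Sum.inr 1)) := by
  rw [cnB]
  by_cases hux : u = x <;> simp [hux, or_comm] <;> tauto

lemma mem_cnY {w : (V ⊕ V) ⊕ Fin 2} :
    w ∈ closedNbhd (Gx H x) (Sum.inr 0) ↔ (w = Sum.inr 0 ∨ w = Sum.inr 1) := by
  rw [cnY]; simp

lemma mem_cnY' {w : (V ⊕ V) ⊕ Fin 2} :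
    w ∈ closedNbhd (Gx H x) (Sum.inr 1) ↔
      (w = Sum.inr 0 ∨ w = Sum.inr 1 ∨ w = eB x) := by
  rw [cnY']; simp

/-- `VAset` membership facts. -/
lemma mem_VAset' {w : (V ⊕ V) ⊕ Fin 2} : w ∈ VAset (V := V) ↔ ∃ u, eA u = w := by
  simp [VAset]

lemma hA_split' : ∀ v ∈ VAset (V := V), ∀ w ∈ closedNbhd (Gx H x) v, w ∈ VAset (V := V) := by
  intro v hv w hw
  obtain ⟨u, rfl⟩ := mem_VAset'.1 hv
  obtain ⟨z, _, rfl⟩ := (mem_cnA H x).1 hw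
  exact mem_VAset'.2 ⟨z, rfl⟩

lemma hB_split' : ∀ v, v ∉ VAset (V := V) →
    ∀ w ∈ closedNbhd (Gx H x) v, w ∉ VAset (V := V) := by
  have hnB : ∀ u : V, eB u ∉ VAset (V := V) := fun u h => by
    obtain ⟨z, hz⟩ := mem_VAset'.1 h
    simp [eA, eB] at hz
  have hnI : ∀ i : Fin 2, (Sum.inr i : (V ⊕ V) ⊕ Fin 2) ∉ VAset (V := V) :=
    fun i h => by
      obtain ⟨z, hz⟩ := mem_VAset'.1 h
      simp [eA] at hz
  intro v hv w hw
  rcases v with (u | u) | i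
  · exact absurd (mem_VAset'.2 ⟨u, rfl⟩) hv
  · rcases (mem_cnB H x).1 hw with ⟨z, _, rfl⟩ | ⟨_, rfl⟩
    · exact hnB z
    · exact hnI 1
  · have h2 : i = 0 ∨ i = 1 := by fin_cases i; exacts [Or.inl rfl, Or.inr rfl]
    rcases h2 with rfl | rfl
    · rcases (mem_cnY H x).1 hw with rfl | rfl
      · exact hnI 0
      · exact hnI 1
    · rcases (mem_cnY' H x).1 hw with rfl | rfl | rfl
      · exact hnI 0
      · exact hnI 1
      · exact hnB x

end MemLemmas

section VB
variable {V : Type*} [Fintype V]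

/-- The complement of `VAset`, packaged to hide the instance. -/
noncomputable def VBset : Finset ((V ⊕ V) ⊕ Fin 2) := (VAset (V := V))ᶜ

lemma mem_VBset {w : (V ⊕ V) ⊕ Fin 2} : w ∈ VBset (V := V) ↔ w ∉ VAset (V := V) := by
  simp [VBset]

end VB
lemma chain1 {g t0 k : ℕ} (h1 : g ≤ 1 + t0) (h2 : t0 ≤ 2 * k) : g ≤ 2 * k + 1 := by omega

lemma combine {a b k : ℕ} (ha : a ≤ k) (hb : b ≤ k) (hk : k % 2 = 0) :
    (a + a % 2) + (b + b % 2) ≤ 2 * k := by omega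
/-- Under the double-Staller hypotheses on `H` and `x`, Dominator has a strategy in the
Dominator-start game on `G - e` (where `G = H_{x,3}` and `e = xy`) guaranteeing that the
game ends in at most `2k + 1` moves, i.e. `γ_g(G - e) ≤ 2k + 1`. -/
theorem stmt17 {V : Type*} [Fintype V] (H : SimpleGraph V) (x : V) (k : ℕ)
    (hk : 0 < k) (hke : Even k) (hds : IsDoubleStaller H)
    (h1 : gammaG H {x} = k + 1) (h2 : gammaG H ∅ = k + 1)
    (h3 : gammaG' H {x} = k) (h4 : gammaG' H ∅ = k) :
    gammaG ((Hx3 H x).deleteEdges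
      {s(Sum.inl (Sum.inl x), Sum.inr (0 : Fin 2))}) ∅ ≤ 2 * k + 1 := by
  show gammaG (Gx H x) ∅ ≤ 2 * k + 1
  rw [gammaG]
  have hk2 : k % 2 = 0 := Nat.even_iff.1 hke
  have hne : (∅ : Finset ((V ⊕ V) ⊕ Fin 2)) ≠ Finset.univ := by
    intro h
    have hm := Finset.mem_univ (Sum.inr 0 : (V ⊕ V) ⊕ Fin 2)
    rw [← h] at hm
    exact Finset.notMem_empty _ hm
  have hylegal : (Sum.inr 1 : (V ⊕ V) ⊕ Fin 2) ∈ legalMoves (Gx H x) ∅ := by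
    simp only [legalMoves, Finset.mem_filter, Finset.mem_univ, true_and]
    intro hc
    exact Finset.notMem_empty _ (hc (mem_closedNbhd_self (Gx H x) (Sum.inr 1)))
  have step1 := gameVal_true_le (Gx H x) hne hylegal
  refine chain1 step1 ?_
  refine le_trans (sum_lemma (Gx H x) (VAset (V := V)) ?_ ?_ _) (combine ?_ ?_ hk2)
  · exact fun v hv w hw => hA_split' H x v hv w hw
  · intro v hv w hw
    simp only [Finset.mem_compl] at hv ⊢
    exact hB_split' H x v hv w hw
  · -- first component value is at most k
    refine le_trans (gameVal_mono (Gx H x) ?_)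
      (le_of_eq (Eq.trans
        (transfer H (Gx H x) (eA (V := V)) (fun a b h => by simpa [eA] using h)
          (VBset (V := V)) ∅ ?_ ?_ ?_ ?_ false ∅ (Finset.empty_subset ∅)) h4))
    · intro w hw
      simp only [Finset.mem_union] at hw ⊢
      rcases hw with h1 | h1
      · simp at h1
      · right
        simp only [Finset.mem_compl]
        exact mem_VBset.1 h1
    · exact fun u h => (mem_VBset.1 h) (mem_VAset'.2 ⟨u, rfl⟩)
    · intro w hw
      obtain ⟨u, hu⟩ := mem_VAset'.1 (by simpa [mem_VBset] using hw)
      exact ⟨u, hu.symm⟩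
    · intro u
      ext w
      simp only [Finset.mem_union, mem_cnA H x, Finset.mem_image]
    · intro w hw z hz
      simp only [Finset.mem_union]
      right
      refine mem_VBset.2 (hB_split' H x w ?_ z hz)
      intro hwA
      obtain ⟨u, hu⟩ := mem_VAset'.1 hwA
      exact hw u hu.symm
  · -- second component value is at most k
    refine le_trans (gameVal_mono (Gx H x) ?_)
      (le_of_eq (Eq.trans
        (transfer H (Gx H x) (eB (V := V)) (fun a b h => by simpa [eB] using h)
          (Tset (V := V)) {x} ?_ ?_ ?_ ?_ false {x} (le_refl _)) h3))
    · intro w hw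
      simp only [Finset.mem_union] at hw ⊢
      rcases hw with h1 | h1
      · simp only [Finset.mem_image, Finset.mem_singleton] at h1
        obtain ⟨u, hux, rfl⟩ := h1
        left; right
        exact (mem_cnY' H x).2 (Or.inr (Or.inr (by rw [hux])))
      · simp only [Tset, Finset.mem_union, Finset.mem_insert, Finset.mem_singleton] at h1
        rcases h1 with h2 | rfl | rfl
        · right; exact h2
        · left; right
          exact (mem_cnY' H x).2 (Or.inl rfl)
        · left; right
          exact (mem_cnY' H x).2 (Or.inr (Or.inl rfl))
    · intro u hu
      simp only [Tset, Finset.mem_union, Finset.mem_insert, Finset.mem_singleton] at hu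
      rcases hu with h | h | h
      · obtain ⟨z, hz⟩ := mem_VAset'.1 h
        simp [eA, eB] at hz
      · simp [eB] at h
      · simp [eB] at h
    · intro w hw
      simp only [Tset, Finset.mem_union, Finset.mem_insert, Finset.mem_singleton,
        not_or] at hw
      obtain ⟨hw1, hw2, hw3⟩ := hw
      rcases w with (u | u) | i
      · exact absurd (mem_VAset'.2 ⟨u, rfl⟩) hw1
      · exact ⟨u, rfl⟩
      · have hi : i = 0 ∨ i = 1 := by fin_cases i; exacts [Or.inl rfl, Or.inr rfl]
        rcases hi with rfl | rfl
        · exact absurd rfl hw2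
        · exact absurd rfl hw3
    · intro u
      ext w
      simp only [Finset.mem_union, mem_cnB H x, Finset.mem_image, Tset,
        Finset.mem_insert, Finset.mem_singleton]
      constructor
      · rintro ((⟨z, hz, rfl⟩ | ⟨-, rfl⟩) | h)
        · exact Or.inl ⟨z, hz, rfl⟩
        · exact Or.inr (Or.inr (Or.inr rfl))
        · exact Or.inr h
      · rintro (⟨z, hz, rfl⟩ | h)
        · exact Or.inl (Or.inl ⟨z, hz, rfl⟩)
        · exact Or.inr h
    · intro w hw z hz
      simp only [Finset.mem_union]
      rcases w with (u | u) | i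
      · have hzA := hA_split' H x (eA u) (mem_VAset'.2 ⟨u, rfl⟩) z hz
        right
        simp only [Tset, Finset.mem_union]
        exact Or.inl hzA
      · exact absurd rfl (hw u)
      · have hi : i = 0 ∨ i = 1 := by fin_cases i; exacts [Or.inl rfl, Or.inr rfl]
        rcases hi with rfl | rfl
        · rcases (mem_cnY H x).1 hz with rfl | rfl
          · right
            simp [Tset]
          · right
            simp [Tset]
        · rcases (mem_cnY' H x).1 hz with rfl | rfl | rfl
          · right
            simp [Tset]
          · right
            simp [Tset]
          · left
            simp only [Finset.mem_image, Finset.mem_singleton]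
            exact ⟨x, rfl, rfl⟩
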